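/- Lower bound on the marginal posterior probability of the true configuration. For every realization of the data y, the marginal posterior probability of S* satisfies π^n(S*) ≥ D_n^{−1} π(S*) (γ/(α+γ))^{|S*|/2}, where D_n = Σ_S π(S) ∫ R_n^α(β_{S+}) π_n(β_S|S) dβ_S, with R_n(β) = L_n(β)/L_n(β*) the likelihood ratio, L_n(β) = exp{−‖y − Xβ‖²/(2σ²)}, and β_{S+} ∈ R^p the vector equal to β_S on S and 0 off S. The bound follows since ‖y − ŷ_{S*}‖² ≤ ‖y − Xβ*‖². -/

import Mathlib

open MeasureTheory ProbabilityTheory Real Filter Matrix Asymptotics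
open scoped ENNReal NNReal Classical Topology

noncomputable section

namespace VB

/-- The configuration (support) of a coefficient vector. -/
def config {p : ℕ} (β : Fin p → ℝ) : Finset (Fin p) :=
  Finset.univ.filter fun j => β j ≠ 0

/-- The submatrix of `X` consisting of the columns indexed by `S`. -/
def XS {n p : ℕ} (X : Matrix (Fin n) (Fin p) ℝ) (S : Finset (Fin p)) :
    Matrix (Fin n) S ℝ := Matrix.of fun i j => X i j.1

/-- The Gram matrix `X_Sᵀ X_S`. -/
def gram {n p : ℕ} (X : Matrix (Fin n) (Fin p) ℝ) (S : Finset (Fin p)) :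
    Matrix S S ℝ := (XS X S)ᵀ * XS X S

/-- The least squares estimator based on the columns in `S`:
`β̂_S = (X_Sᵀ X_S)⁻¹ X_Sᵀ y`. -/
def lse {n p : ℕ} (X : Matrix (Fin n) (Fin p) ℝ) (S : Finset (Fin p)) (y : Fin n → ℝ) :
    S → ℝ := (gram X S)⁻¹.mulVec ((XS X S)ᵀ.mulVec y)

/-- Squared Euclidean norm of a vector. -/
def sqNorm {ι : Type*} [Fintype ι] (v : ι → ℝ) : ℝ := ∑ i, v i ^ 2

/-- Lebesgue density of the empirical conditional prior
`N(β̂_S, γ⁻¹ σ² (X_Sᵀ X_S)⁻¹)` for `β_S` given `S`. -/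
def priorDens (σ2 γ : ℝ) {n p : ℕ} (X : Matrix (Fin n) (Fin p) ℝ) (S : Finset (Fin p))
    (y : Fin n → ℝ) (b : S → ℝ) : ℝ :=
  Real.sqrt ((gram X S).det * (γ / (2 * π * σ2)) ^ S.card) *
    Real.exp (-(γ / (2 * σ2)) * ((b - lse X S y) ⬝ᵥ (gram X S).mulVec (b - lse X S y)))

/-- The `α`-power likelihood `exp{-(α/(2σ²)) ‖y - X_S β_S‖²}`. -/
def likeα (α σ2 : ℝ) {n p : ℕ} (X : Matrix (Fin n) (Fin p) ℝ) (S : Finset (Fin p))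
    (y : Fin n → ℝ) (b : S → ℝ) : ℝ :=
  Real.exp (-(α / (2 * σ2)) * sqNorm (y - (XS X S).mulVec b))

/-- Unnormalized prior weight of a configuration `S`:
`binom(p,|S|)⁻¹ (c p^a)^{-|S|}` for `|S| ≤ n`, else `0`. -/
def priorSWt (a c : ℝ) (n p : ℕ) (S : Finset (Fin p)) : ℝ :=
  if S.card ≤ n then ((p.choose S.card : ℝ) * (c * (p : ℝ) ^ a) ^ S.card)⁻¹ else 0

/-- Normalized prior probability of a configuration `S`. -/
def priorS (a c : ℝ) (n p : ℕ) (S : Finset (Fin p)) : ℝ :=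
  priorSWt a c n p S / ∑ T : Finset (Fin p), priorSWt a c n p T

/-- Embed a vector indexed by `S` into `ℝ^p`, filling in zeros off `S`. -/
def embed {p : ℕ} (S : Finset (Fin p)) (b : S → ℝ) : Fin p → ℝ :=
  fun j => if h : j ∈ S then b ⟨j, h⟩ else 0

/-- The (unnormalized) component of the empirical Bayes posterior corresponding to
configuration `S`: the measure on `ℝ^p`, supported on vectors vanishing off `S`, with
density `L_n^α(S, β_S) π_n(β_S | S)` over `β_S`. -/
def postComp (α σ2 γ : ℝ) {n p : ℕ} (X : Matrix (Fin n) (Fin p) ℝ) (y : Fin n → ℝ)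
    (S : Finset (Fin p)) : Measure (Fin p → ℝ) :=
  ((volume : Measure (S → ℝ)).withDensity fun b =>
      ENNReal.ofReal (likeα α σ2 X S y b * priorDens σ2 γ X S y b)).map (embed S)

/-- The unnormalized empirical Bayes posterior on `ℝ^p`. -/
def postUn (α σ2 γ a c : ℝ) {n p : ℕ} (X : Matrix (Fin n) (Fin p) ℝ) (y : Fin n → ℝ) :
    Measure (Fin p → ℝ) :=
  Measure.sum fun S : Finset (Fin p) =>
    ENNReal.ofReal (priorS a c n p S) • postComp α σ2 γ X y S

/-- The empirical Bayes posterior `π^n` on `ℝ^p` (normalized). -/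
def post (α σ2 γ a c : ℝ) {n p : ℕ} (X : Matrix (Fin n) (Fin p) ℝ) (y : Fin n → ℝ) :
    Measure (Fin p → ℝ) :=
  (postUn α σ2 γ a c X y Set.univ)⁻¹ • postUn α σ2 γ a c X y

/-- One coordinate of a mean-field distribution: `φ N(μ, τ²) + (1-φ) δ₀`. -/
def mixComp (φ μ : ℝ) (τ2 : ℝ≥0) : Measure ℝ :=
  ENNReal.ofReal φ • gaussianReal μ τ2 + ENNReal.ofReal (1 - φ) • Measure.dirac 0

/-- A mean-field distribution on `ℝ^p`. -/
def meanField {p : ℕ} (φ μ : Fin p → ℝ) (τ2 : Fin p → ℝ≥0) : Measure (Fin p → ℝ) :=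
  Measure.pi fun j => mixComp (φ j) (μ j) (τ2 j)

/-- The mean-field variational family `Q`. -/
def MeanFieldFamily (p : ℕ) : Set (Measure (Fin p → ℝ)) :=
  { q | ∃ (φ μ : Fin p → ℝ) (τ2 : Fin p → ℝ≥0),
      (∀ j, φ j ∈ Set.Icc (0 : ℝ) 1) ∧ (∀ j, 0 < τ2 j) ∧ q = meanField φ μ τ2 }

/-- Kullback–Leibler divergence `K(q, P) = ∫ log (dq/dP) dq`, set to `⊤` when `q` is not
absolutely continuous with respect to `P`. -/
def KL {𝓧 : Type*} [MeasurableSpace 𝓧] (q P : Measure 𝓧) : EReal :=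
  if q ≪ P then ((∫ x, Real.log (q.rnDeriv P x).toReal ∂q : ℝ) : EReal) else ⊤

/-- `q` is a variational approximation of `P`: it belongs to the mean-field family and
minimizes the Kullback–Leibler divergence to `P` over that family. -/
def IsVarApprox {p : ℕ} (q P : Measure (Fin p → ℝ)) : Prop :=
  q ∈ MeanFieldFamily p ∧ ∀ q' ∈ MeanFieldFamily p, KL q P ≤ KL q' P

/-- The sampling distribution of the data: `y ~ N_n(Xβ, σ² I_n)`. -/
def dataDist (σ2 : ℝ) {n p : ℕ} (X : Matrix (Fin n) (Fin p) ℝ) (β : Fin p → ℝ) :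
    Measure (Fin n → ℝ) :=
  Measure.pi fun i => gaussianReal (X.mulVec β i) σ2.toNNReal

end VB

namespace VB

/-- Least squares fitted value `ŷ_S = X_S β̂_S`. -/
def fitted {n p : ℕ} (X : Matrix (Fin n) (Fin p) ℝ) (S : Finset (Fin p)) (y : Fin n → ℝ) :
    Fin n → ℝ := (XS X S).mulVec (lse X S y)

/-- Unnormalized marginal posterior mass of configuration `S`:
`π(S) (γ/(α+γ))^{|S|/2} exp{-(α/(2σ²)) ‖y - ŷ_S‖²}`. -/
def margUn (α σ2 γ a c : ℝ) {n p : ℕ} (X : Matrix (Fin n) (Fin p) ℝ) (y : Fin n → ℝ)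
    (S : Finset (Fin p)) : ℝ :=
  priorS a c n p S * Real.sqrt ((γ / (α + γ)) ^ S.card) *
    Real.exp (-(α / (2 * σ2)) * sqNorm (y - fitted X S y))

/-- The marginal posterior probability of configuration `S`. -/
def marg (α σ2 γ a c : ℝ) {n p : ℕ} (X : Matrix (Fin n) (Fin p) ℝ) (y : Fin n → ℝ)
    (S : Finset (Fin p)) : ℝ :=
  margUn α σ2 γ a c X y S / ∑ T : Finset (Fin p), margUn α σ2 γ a c X y T

/-- The denominator `D_n = Σ_S π(S) ∫ R_n^α(β_{S+}) π_n(β_S|S) dβ_S`, where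
`R_n(β) = L_n(β)/L_n(β*)` is the likelihood ratio. -/
def Dn (α σ2 γ a c : ℝ) {n p : ℕ} (X : Matrix (Fin n) (Fin p) ℝ) (y : Fin n → ℝ)
    (βstar : Fin p → ℝ) : ℝ :=
  ∑ S : Finset (Fin p), priorS a c n p S *
    ∫ b : S → ℝ,
      Real.exp (-(α / (2 * σ2)) *
          (sqNorm (y - (XS X S).mulVec b) - sqNorm (y - X.mulVec βstar))) *
        priorDens σ2 γ X S y b

section Aux

open scoped MatrixOrder in
/-- A square root of a positive semidefinite real matrix. -/
def _root_.Matrix.PosSemidef.sqrt {ι : Type*} [Fintype ι] [DecidableEq ι]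
    {G : Matrix ι ι ℝ} (_hG : G.PosSemidef) : Matrix ι ι ℝ := CFC.sqrt G

open scoped MatrixOrder in
lemma _root_.Matrix.PosSemidef.sqrt_mul_self {ι : Type*} [Fintype ι] [DecidableEq ι]
    {G : Matrix ι ι ℝ} (hG : G.PosSemidef) : hG.sqrt * hG.sqrt = G :=
  CFC.sqrt_mul_sqrt_self G hG.nonneg

open scoped MatrixOrder in
lemma _root_.Matrix.PosSemidef.posSemidef_sqrt {ι : Type*} [Fintype ι] [DecidableEq ι]
    {G : Matrix ι ι ℝ} (hG : G.PosSemidef) : hG.sqrt.PosSemidef :=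
  (CFC.sqrt_nonneg G).posSemidef

lemma sqrt_pow_comm' {x : ℝ} (hx : 0 ≤ x) (k : ℕ) :
    (Real.sqrt x) ^ k = Real.sqrt (x ^ k) := by
  induction k with
  | zero => simp
  | succ k ih => rw [pow_succ, pow_succ, ih, ← Real.sqrt_mul (by positivity)]

lemma dot_quad_eq {ι : Type*} [Fintype ι] [DecidableEq ι]
    {G : Matrix ι ι ℝ} (hG : G.PosSemidef) (q : ι → ℝ) :
    q ⬝ᵥ G.mulVec q = ∑ i, (hG.sqrt.mulVec q i) ^ 2 := by
  have hRR : hG.sqrt * hG.sqrt = G := hG.sqrt_mul_self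
  have hsym : hG.sqrtᵀ = hG.sqrt := by
    have := hG.posSemidef_sqrt.isHermitian
    simpa [Matrix.IsHermitian, Matrix.conjTranspose_eq_transpose_of_trivial] using this
  calc q ⬝ᵥ G.mulVec q = q ⬝ᵥ (hG.sqrt * hG.sqrt).mulVec q := by rw [hRR]
    _ = (hG.sqrt.mulVec q) ⬝ᵥ (hG.sqrt.mulVec q) := by
        rw [← Matrix.mulVec_mulVec, Matrix.dotProduct_mulVec, ← Matrix.vecMul_transpose, hsym]
    _ = ∑ i, (hG.sqrt.mulVec q i) ^ 2 := by simp [dotProduct, sq]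

lemma det_pos_of_psd {ι : Type*} [Fintype ι] [DecidableEq ι]
    {G : Matrix ι ι ℝ} (hG : G.PosSemidef) (hdet : G.det ≠ 0) : 0 < G.det := by
  have hdet2 : hG.sqrt.det * hG.sqrt.det = G.det := by
    rw [← Matrix.det_mul, hG.sqrt_mul_self]
  have h0 : 0 ≤ G.det := hdet2 ▸ mul_self_nonneg _
  exact h0.lt_of_ne (Ne.symm hdet)

lemma integral_exp_neg_quadForm {ι : Type*} [Fintype ι] [DecidableEq ι]
    {G : Matrix ι ι ℝ} (hG : G.PosSemidef) (hdet : G.det ≠ 0) {cc : ℝ} (hcc : 0 < cc) :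
    ∫ q : ι → ℝ, Real.exp (-cc * (q ⬝ᵥ G.mulVec q)) =
      Real.sqrt ((π / cc) ^ Fintype.card ι / G.det) := by
  set R := hG.sqrt with hRdef
  have hRR : R * R = G := hG.sqrt_mul_self
  have hdet2 : R.det * R.det = G.det := by rw [← Matrix.det_mul, hRR]
  have hdetR : R.det ≠ 0 := fun h => hdet (by rw [← hdet2, h, mul_zero])
  have hdetGpos : 0 < G.det := det_pos_of_psd hG hdet
  have hmap := Real.map_matrix_volume_pi_eq_smul_volume_pi (M := R) hdetR
  set f : (ι → ℝ) → ℝ := fun u => Real.exp (-cc * ∑ i, u i ^ 2) with hf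
  have hfc : Continuous f := by
    apply Real.continuous_exp.comp
    exact continuous_const.mul (continuous_finset_sum _ fun i _ => (continuous_apply i).pow 2)
  have h1 : ∫ q : ι → ℝ, Real.exp (-cc * (q ⬝ᵥ G.mulVec q)) = ∫ q : ι → ℝ, f (R.mulVec q) := by
    congr 1; ext q; rw [dot_quad_eq hG]
  have h2 : ∫ q : ι → ℝ, f (R.mulVec q) = (|R.det|⁻¹) * ∫ u, f u := by
    have : ∫ q : ι → ℝ, f (Matrix.toLin' R q) =
        ∫ u, f u ∂(Measure.map (Matrix.toLin' R) volume) := by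
      rw [integral_map
        (Measurable.aemeasurable (Matrix.toLin' R).continuous_of_finiteDimensional.measurable)
        hfc.aestronglyMeasurable]
    simp only [Matrix.toLin'_apply] at this
    rw [this, hmap, integral_smul_measure, ENNReal.toReal_ofReal (by positivity), smul_eq_mul,
      abs_inv]
  have h3 : ∫ u : ι → ℝ, f u = (Real.sqrt (π / cc)) ^ Fintype.card ι := by
    have : ∀ u : ι → ℝ, f u = ∏ i, Real.exp (-cc * u i ^ 2) := by
      intro u; rw [hf]; simp only [Finset.mul_sum, neg_mul]
      rw [← Real.exp_sum]
    simp_rw [this]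
    rw [MeasureTheory.volume_pi, MeasureTheory.integral_fintype_prod_eq_pow (ι := ι) (fun x : ℝ => Real.exp (-cc * x ^ 2)),
      integral_gaussian]
  have hRdetsqrt : |R.det| = Real.sqrt G.det := by
    rw [← hdet2, Real.sqrt_mul_self_eq_abs]
  rw [h1, h2, h3, hRdetsqrt, sqrt_pow_comm' (by positivity),
    Real.sqrt_div (by positivity : (0:ℝ) ≤ (π / cc) ^ Fintype.card ι), inv_mul_eq_div]

end Aux

lemma sqNorm_eq_dot {ι : Type*} [Fintype ι] (v : ι → ℝ) : sqNorm v = v ⬝ᵥ v := by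
  simp [sqNorm, dotProduct, sq]

lemma gram_posSemidef {n p : ℕ} (X : Matrix (Fin n) (Fin p) ℝ) (S : Finset (Fin p)) :
    (gram X S).PosSemidef := by
  have := Matrix.posSemidef_conjTranspose_mul_self (XS X S)
  simpa [gram, Matrix.conjTranspose_eq_transpose_of_trivial] using this

lemma normal_eq {n p : ℕ} (X : Matrix (Fin n) (Fin p) ℝ) {S : Finset (Fin p)}
    (hS : IsUnit (gram X S).det) (y : Fin n → ℝ) :
    (XS X S)ᵀ.mulVec (y - fitted X S y) = 0 := by
  have : (XS X S)ᵀ.mulVec (fitted X S y) = (XS X S)ᵀ.mulVec y := by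
    rw [fitted, Matrix.mulVec_mulVec, lse, Matrix.mulVec_mulVec, ← gram,
      Matrix.mul_nonsing_inv _ hS, Matrix.one_mulVec]
  rw [Matrix.mulVec_sub, this, sub_self]

lemma pythagoras {n p : ℕ} (X : Matrix (Fin n) (Fin p) ℝ) {S : Finset (Fin p)}
    (hS : IsUnit (gram X S).det) (y : Fin n → ℝ) (b : S → ℝ) :
    sqNorm (y - (XS X S).mulVec b) =
      sqNorm (y - fitted X S y) +
        (b - lse X S y) ⬝ᵥ (gram X S).mulVec (b - lse X S y) := by
  set e := y - fitted X S y with he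
  set q := b - lse X S y with hq
  have hyb : y - (XS X S).mulVec b = e - (XS X S).mulVec q := by
    rw [he, hq, Matrix.mulVec_sub]
    abel_nf
    rw [fitted]
    abel
  have hcross : e ⬝ᵥ (XS X S).mulVec q = 0 := by
    rw [Matrix.dotProduct_mulVec, ← Matrix.mulVec_transpose, normal_eq X hS y,
      zero_dotProduct]
  have hw : ((XS X S).mulVec q) ⬝ᵥ ((XS X S).mulVec q) = q ⬝ᵥ (gram X S).mulVec q := by
    rw [Matrix.dotProduct_mulVec ((XS X S).mulVec q), ← Matrix.mulVec_transpose,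
      Matrix.mulVec_mulVec, ← gram, dotProduct_comm]
  rw [hyb]
  simp only [sqNorm_eq_dot, sub_dotProduct, dotProduct_sub]
  rw [hcross, dotProduct_comm ((XS X S).mulVec q) e, hcross, hw]
  ring


lemma exp_mul_helper (s A B A' B' : ℝ) (h : A + B = A' + B') :
    Real.exp A * (s * Real.exp B) = s * Real.exp A' * Real.exp B' := by
  rw [mul_assoc, ← Real.exp_add, ← h, Real.exp_add]
  ring

lemma integral_component (σ2 α γ : ℝ) (hσ2 : 0 < σ2) (hα : 0 < α) (hγ : 0 < γ)
    {n p : ℕ} (X : Matrix (Fin n) (Fin p) ℝ) {S : Finset (Fin p)}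
    (hS : IsUnit (gram X S).det) (y : Fin n → ℝ) :
    ∫ b : S → ℝ, likeα α σ2 X S y b * priorDens σ2 γ X S y b =
      Real.sqrt ((γ / (α + γ)) ^ S.card) *
        Real.exp (-(α / (2 * σ2)) * sqNorm (y - fitted X S y)) := by
  classical
  have hpsd := gram_posSemidef X S
  have hdet : (gram X S).det ≠ 0 := hS.ne_zero
  have hdetpos : 0 < (gram X S).det := det_pos_of_psd hpsd hdet
  set G := gram X S
  set k := S.card with hk
  set E := sqNorm (y - fitted X S y) with hE
  set C := Real.sqrt (G.det * (γ / (2 * π * σ2)) ^ k) with hC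
  set cc := (α + γ) / (2 * σ2) with hcc
  have hccpos : 0 < cc := by positivity
  have hpoint : ∀ b : S → ℝ, likeα α σ2 X S y b * priorDens σ2 γ X S y b =
      (C * Real.exp (-(α / (2 * σ2)) * E)) *
        Real.exp (-cc * ((b - lse X S y) ⬝ᵥ G.mulVec (b - lse X S y))) := by
    intro b
    rw [likeα, priorDens, pythagoras X hS y b, hC, hE, hcc, hk]
    exact exp_mul_helper _ _ _ _ _ (by ring)
  rw [MeasureTheory.integral_congr_ae (Filter.Eventually.of_forall hpoint),
    MeasureTheory.integral_const_mul]
  have htrans : ∫ b : S → ℝ,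
      Real.exp (-cc * ((b - lse X S y) ⬝ᵥ G.mulVec (b - lse X S y))) =
      ∫ q : S → ℝ, Real.exp (-cc * (q ⬝ᵥ G.mulVec q)) := by
    exact MeasureTheory.integral_sub_right_eq_self
      (fun q => Real.exp (-cc * (q ⬝ᵥ G.mulVec q))) (lse X S y)
  rw [htrans, integral_exp_neg_quadForm hpsd hdet hccpos]
  have hcard : Fintype.card S = k := Fintype.card_coe S
  rw [hcard, hC, mul_right_comm, ← Real.sqrt_mul (by positivity)]
  have hbase : γ / (2 * π * σ2) * (π / cc) = γ / (α + γ) := by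
    rw [hcc]
    have hπ : (0:ℝ) < π := Real.pi_pos
    field_simp
  have harg : G.det * (γ / (2 * π * σ2)) ^ k * ((π / cc) ^ k / G.det)
      = (γ / (2 * π * σ2) * (π / cc)) ^ k := by
    rw [mul_pow]
    field_simp
  rw [harg, hbase]


lemma priorSWt_nonneg {a c : ℝ} (hc : 0 < c) (n p : ℕ) (S : Finset (Fin p)) :
    0 ≤ priorSWt a c n p S := by
  rw [priorSWt]
  split
  · have h1 : (0:ℝ) ≤ (p.choose S.card : ℝ) := by positivity
    have h2 : (0:ℝ) ≤ (c * (p : ℝ) ^ a) ^ S.card := by positivity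
    positivity
  · exact le_refl 0

lemma priorSWt_empty (a c : ℝ) (n p : ℕ) : priorSWt a c n p (∅ : Finset (Fin p)) = 1 := by
  rw [priorSWt, if_pos (by simp)]
  simp

lemma sum_priorSWt_pos {a c : ℝ} (hc : 0 < c) (n p : ℕ) :
    0 < ∑ T : Finset (Fin p), priorSWt a c n p T :=
  Finset.sum_pos' (fun T _ => priorSWt_nonneg hc n p T)
    ⟨∅, Finset.mem_univ _, by rw [priorSWt_empty]; norm_num⟩

lemma priorS_nonneg {a c : ℝ} (hc : 0 < c) (n p : ℕ) (S : Finset (Fin p)) :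
    0 ≤ priorS a c n p S :=
  div_nonneg (priorSWt_nonneg hc n p S) (sum_priorSWt_pos hc n p).le

lemma priorS_empty_pos {a c : ℝ} (hc : 0 < c) (n p : ℕ) :
    0 < priorS a c n p (∅ : Finset (Fin p)) := by
  rw [priorS, priorSWt_empty]
  exact div_pos one_pos (sum_priorSWt_pos hc n p)

lemma priorS_eq_zero {a c : ℝ} {n p : ℕ} {S : Finset (Fin p)} (h : ¬ S.card ≤ n) :
    priorS a c n p S = 0 := by
  rw [priorS, priorSWt, if_neg h, zero_div]

lemma margUn_nonneg {σ2 α γ a c : ℝ} (hc : 0 < c) {n p : ℕ}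
    (X : Matrix (Fin n) (Fin p) ℝ) (y : Fin n → ℝ) (S : Finset (Fin p)) :
    0 ≤ margUn α σ2 γ a c X y S :=
  mul_nonneg (mul_nonneg (priorS_nonneg hc n p S) (Real.sqrt_nonneg _)) (Real.exp_pos _).le

lemma sum_margUn_pos {σ2 α γ a c : ℝ} (hc : 0 < c) {n p : ℕ}
    (X : Matrix (Fin n) (Fin p) ℝ) (y : Fin n → ℝ) :
    0 < ∑ T : Finset (Fin p), margUn α σ2 γ a c X y T := by
  refine Finset.sum_pos' (fun T _ => margUn_nonneg hc X y T) ⟨∅, Finset.mem_univ _, ?_⟩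
  rw [margUn, Finset.card_empty, pow_zero, Real.sqrt_one, mul_one]
  exact mul_pos (priorS_empty_pos hc n p) (Real.exp_pos _)

lemma mulVec_config {n p : ℕ} (X : Matrix (Fin n) (Fin p) ℝ) (βstar : Fin p → ℝ) :
    X.mulVec βstar = (XS X (config βstar)).mulVec (fun j => βstar j.1) := by
  funext i
  simp only [Matrix.mulVec, dotProduct, XS, Matrix.of_apply]
  rw [Finset.sum_coe_sort (config βstar) (fun j => X i j * βstar j)]
  exact (Finset.sum_subset (Finset.subset_univ _) (fun j _ hj => by
    have hz : βstar j = 0 := by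
      by_contra h
      exact hj (by simp [config, h])
    simp [hz])).symm

lemma fitted_le_sqNorm {n p : ℕ} (X : Matrix (Fin n) (Fin p) ℝ) {S : Finset (Fin p)}
    (hS : IsUnit (gram X S).det) (y : Fin n → ℝ) (b : S → ℝ) :
    sqNorm (y - fitted X S y) ≤ sqNorm (y - (XS X S).mulVec b) := by
  rw [pythagoras X hS y b]
  have h0 : 0 ≤ (b - lse X S y) ⬝ᵥ (gram X S).mulVec (b - lse X S y) := by
    simpa using (gram_posSemidef X S).re_dotProduct_nonneg (b - lse X S y)
  linarith

lemma Dn_term (σ2 α γ a c : ℝ) (hσ2 : 0 < σ2) (hα : 0 < α) (hγ : 0 < γ) (hc : 0 < c)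
    {n p : ℕ} (X : Matrix (Fin n) (Fin p) ℝ)
    (hns : ∀ S : Finset (Fin p), S.card ≤ n → IsUnit (gram X S).det)
    (βstar : Fin p → ℝ) (y : Fin n → ℝ) (S : Finset (Fin p)) :
    priorS a c n p S *
      ∫ b : S → ℝ,
        Real.exp (-(α / (2 * σ2)) *
            (sqNorm (y - (XS X S).mulVec b) - sqNorm (y - X.mulVec βstar))) *
          priorDens σ2 γ X S y b =
      Real.exp ((α / (2 * σ2)) * sqNorm (y - X.mulVec βstar)) * margUn α σ2 γ a c X y S := by
  have hpoint : ∀ b : S → ℝ,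
      Real.exp (-(α / (2 * σ2)) *
          (sqNorm (y - (XS X S).mulVec b) - sqNorm (y - X.mulVec βstar))) *
        priorDens σ2 γ X S y b =
      Real.exp ((α / (2 * σ2)) * sqNorm (y - X.mulVec βstar)) *
        (likeα α σ2 X S y b * priorDens σ2 γ X S y b) := by
    intro b
    rw [likeα, ← mul_assoc, ← Real.exp_add]
    congr 2
    ring
  rw [MeasureTheory.integral_congr_ae (Filter.Eventually.of_forall hpoint),
    MeasureTheory.integral_const_mul]
  by_cases h : S.card ≤ n
  · rw [integral_component σ2 α γ hσ2 hα hγ X (hns S h) y, margUn]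
    ring
  · rw [priorS_eq_zero h, margUn, priorS_eq_zero h]
    ring

lemma Dn_eq (σ2 α γ a c : ℝ) (hσ2 : 0 < σ2) (hα : 0 < α) (hγ : 0 < γ) (hc : 0 < c)
    {n p : ℕ} (X : Matrix (Fin n) (Fin p) ℝ)
    (hns : ∀ S : Finset (Fin p), S.card ≤ n → IsUnit (gram X S).det)
    (βstar : Fin p → ℝ) (y : Fin n → ℝ) :
    Dn α σ2 γ a c X y βstar =
      Real.exp ((α / (2 * σ2)) * sqNorm (y - X.mulVec βstar)) *
        ∑ T : Finset (Fin p), margUn α σ2 γ a c X y T := by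
  rw [Dn, Finset.mul_sum]
  exact Finset.sum_congr rfl fun S _ =>
    Dn_term σ2 α γ a c hσ2 hα hγ hc X hns βstar y S

/-- **Lower bound on the marginal posterior probability of the true configuration.**
For every realization of the data `y`,
`π^n(S*) ≥ D_n⁻¹ π(S*) (γ/(α+γ))^{|S*|/2}`. -/
theorem marginal_lower_bound
    (σ2 α γ a c : ℝ)
    (hσ2 : 0 < σ2) (hα : α ∈ Set.Ioo (0 : ℝ) 1) (hγ : 0 < γ) (ha : 0 < a) (hc : 0 < c)
    {n p : ℕ} (X : Matrix (Fin n) (Fin p) ℝ)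
    (hrank : X.rank = n)
    (hns : ∀ S : Finset (Fin p), S.card ≤ n → IsUnit (gram X S).det)
    (βstar : Fin p → ℝ) (hcard : (config βstar).card ≤ n)
    (y : Fin n → ℝ) :
    (Dn α σ2 γ a c X y βstar)⁻¹ * priorS a c n p (config βstar) *
        Real.sqrt ((γ / (α + γ)) ^ (config βstar).card) ≤
      marg α σ2 γ a c X y (config βstar) := by
  have hα0 := hα.1
  set S := config βstar with hSdef
  set B := sqNorm (y - X.mulVec βstar) with hB
  set E := sqNorm (y - fitted X S y) with hE
  set T := ∑ T : Finset (Fin p), margUn α σ2 γ a c X y T with hT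
  have hTpos : 0 < T := sum_margUn_pos hc X y
  have hDn := Dn_eq σ2 α γ a c hσ2 hα0 hγ hc X hns βstar y
  have hEB : E ≤ B := by
    rw [hB, hE, mulVec_config X βstar]
    exact fitted_le_sqNorm X (hns S hcard) y _
  have hexp : Real.exp (-(α / (2 * σ2)) * B) ≤ Real.exp (-(α / (2 * σ2)) * E) := by
    apply Real.exp_le_exp.2
    have hcpos : (0:ℝ) ≤ α / (2 * σ2) := by positivity
    nlinarith
  have hP : 0 ≤ priorS a c n p S := priorS_nonneg hc n p S
  have hR : 0 ≤ Real.sqrt ((γ / (α + γ)) ^ S.card) := Real.sqrt_nonneg _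
  rw [marg, margUn, hDn, mul_inv, ← Real.exp_neg, ← neg_mul]
  calc (Real.exp (-(α / (2 * σ2)) * B) * T⁻¹) * priorS a c n p S *
        Real.sqrt ((γ / (α + γ)) ^ S.card)
      ≤ (Real.exp (-(α / (2 * σ2)) * E) * T⁻¹) * priorS a c n p S *
        Real.sqrt ((γ / (α + γ)) ^ S.card) := by
        have hTinv : 0 ≤ T⁻¹ := inv_nonneg.2 hTpos.le
        gcongr
    _ = priorS a c n p S * Real.sqrt ((γ / (α + γ)) ^ S.card) *
        Real.exp (-(α / (2 * σ2)) * E) / T := by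
        rw [div_eq_mul_inv]
        ring

end VB
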